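/- arXiv:math/9405208 — 3 statements merged into one kernel-verified Lean document; each statement's English description precedes it below -/
import Mathlib

section
/- For every r.e. set A ⊆ ℕ there is a constant c such that C(χ_A ↾ n) ≤ 2·log n + c for all n, where χ_A ↾ n is the string χ_A(0)…χ_A(n). -/
/-- Binary strings. -/
abbrev Str : Type := List Bool

/-- An interpreter: takes a program and an input string, and possibly returns an
output in `{0,1}* ∪ {⊥}` (`none` is the "don't know" answer `⊥`). -/
abbrev Interp : Type := Str → Str →. Option Str

/-- `λ z. U p z` is a total function. -/
def TotalProg (U : Interp) (p : Str) : Prop := ∀ z : Str, (U p z).Dom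

/-- The output `o` correctly computes `χ_A z` (coding the bit `b` as the string `[b]`). -/
def Agrees (A : Set Str) (z : Str) (o : Option Str) : Prop :=
  (z ∈ A ∧ o = some [true]) ∨ (z ∉ A ∧ o = some [false])

/-- `λ z. U p z` is an `A`-consistent function: every output is `⊥` or `χ_A` of the input. -/
def Consistent (U : Interp) (A : Set Str) (p : Str) : Prop :=
  ∀ z o, o ∈ U p z → o = none ∨ Agrees A z o

/-- Kolmogorov complexity of `x` w.r.t. the interpreter `U` (`⊤` if undefined). -/
noncomputable def KC (U : Interp) (x : Str) : ℕ∞ :=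
  sInf ((fun p : Str => (p.length : ℕ∞)) '' {p | some x ∈ U p []})

/-- Instance complexity of `x` w.r.t. `A` in `U`. -/
noncomputable def ic (U : Interp) (A : Set Str) (x : Str) : ℕ∞ :=
  sInf ((fun p : Str => (p.length : ℕ∞)) ''
    {p | TotalProg U p ∧ Consistent U A p ∧ ∃ o, o ∈ U p x ∧ Agrees A x o})

/-- Weak instance complexity of `x` w.r.t. `A` in `U` (totality is dropped). -/
noncomputable def icw (U : Interp) (A : Set Str) (x : Str) : ℕ∞ :=
  sInf ((fun p : Str => (p.length : ℕ∞)) ''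
    {p | Consistent U A p ∧ ∃ o, o ∈ U p x ∧ Agrees A x o})

/-- `U` is an optimal partial recursive interpreter: it is partial recursive and
simulates every partial recursive interpreter with constant overhead, for `C`,
`ic` and the weak instance complexity. -/
def Optimal (U : Interp) : Prop :=
  Partrec₂ U ∧
    ∀ U' : Interp, Partrec₂ U' → ∃ c : ℕ,
      (∀ x, KC U x ≤ KC U' x + c) ∧
      (∀ A x, ic U A x ≤ ic U' A x + c) ∧
      (∀ A x, icw U A x ≤ icw U' A x + c)

/-- A set is recursively enumerable. -/
def REset {α : Type} [Primcodable α] (A : Set α) : Prop := REPred (· ∈ A)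

/-- A set is recursive (decidable). -/
def Recursive {α : Type} [Primcodable α] (A : Set α) : Prop := ComputablePred (· ∈ A)

/-- The initial segment `χ_A(0)…χ_A(n)` of the characteristic sequence of `A ⊆ ℕ`. -/
noncomputable def seg (A : Set ℕ) (n : ℕ) : Str :=
  (List.range (n + 1)).map fun i => @decide (i ∈ A) (Classical.propDecidable _)

/-- Apply `f : ℕ → ℕ` to an extended natural (sending `⊤` to `⊤`). -/
noncomputable def emap (f : ℕ → ℕ) (n : ℕ∞) : ℕ∞ :=
  if n = ⊤ then ⊤ else (f n.toNat : ℕ∞)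

/-- The canonical correspondence `ℕ → {0,1}*` (the binary expansion of `n+1`
with the leading bit removed). -/
def natToStr (n : ℕ) : Str := (Nat.bits (n + 1)).dropLast

/-- The string `χ_A(x_0)…χ_A(x_{n-1})` for the first `n` strings `x_0, x_1, …` in
canonical order, for `A ⊆ {0,1}*`. -/
noncomputable def segS (A : Set Str) (n : ℕ) : Str :=
  (List.range n).map fun i => @decide (natToStr i ∈ A) (Classical.propDecidable _)

/-- The `e`-th r.e. set of strings. -/
def W (e : ℕ) : Set Str :=
  {x | ((Denumerable.ofNat Nat.Partrec.Code e).eval (Encodable.encode x)).Dom}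

/-- The halting set. -/
def Khalt : Set ℕ := {e | ((Denumerable.ofNat Nat.Partrec.Code e).eval e).Dom}

namespace S4
open Nat.Partrec (Code)
open Nat.Partrec.Code

def strToNat (s : Str) : ℕ := ((s ++ [true]).foldr (fun b n => Nat.bit b n) 0) - 1

theorem foldr_bit_bits (m : ℕ) : (Nat.bits m).foldr Nat.bit 0 = m := by
  induction m using Nat.binaryRec' with
  | zero => simp
  | bit b n h ih => rw [Nat.bits_append_bit n b h, List.foldr_cons, ih]

theorem bits_dropLast (m : ℕ) (hm : m ≠ 0) :
    (Nat.bits m).dropLast ++ [true] = Nat.bits m := by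
  induction m using Nat.binaryRec' with
  | zero => simp at hm
  | bit b n h ih =>
    rw [Nat.bits_append_bit n b h]
    rcases eq_or_ne n 0 with rfl | hn
    · rw [h rfl]; simp
    · have hne : Nat.bits n ≠ [] := by
        intro h0
        have := foldr_bit_bits n
        rw [h0] at this
        exact hn this.symm
      obtain ⟨x, l, hl⟩ := List.exists_cons_of_ne_nil hne
      rw [hl] at ih ⊢
      simpa [List.dropLast] using congrArg (List.cons b) (ih hn)

theorem strToNat_natToStr (n : ℕ) : strToNat (natToStr n) = n := by
  unfold strToNat natToStr
  rw [bits_dropLast (n + 1) (Nat.succ_ne_zero n), foldr_bit_bits]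
  simp

theorem strToNat_primrec : Primrec strToNat := by
  have hstep : Primrec₂ (fun (_ : Str) (p : Bool × ℕ) => Nat.bit p.1 p.2) := by
    have : Primrec₂ (fun (_ : Str) (p : Bool × ℕ) => cond p.1 (2 * p.2 + 1) (2 * p.2)) :=
      Primrec.to₂ (Primrec.cond (Primrec.fst.comp Primrec.snd)
        (Primrec.nat_double_succ.comp (Primrec.snd.comp Primrec.snd))
        (Primrec.nat_double.comp (Primrec.snd.comp Primrec.snd)))
    exact this.of_eq fun _ p => by cases p.1 <;> rfl
  have h1 : Primrec fun s : Str => (s ++ [true]).foldr (fun b n => Nat.bit b n) 0 := by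
    have := Primrec.list_foldr (α := Str) (β := Bool) (σ := ℕ)
      (f := fun s => s ++ [true]) (g := fun _ => 0)
      (h := fun _ p => Nat.bit p.1 p.2)
      (Primrec.list_concat.comp Primrec.id (Primrec.const true))
      (Primrec.const 0) hstep
    exact this
  exact Primrec.pred.comp h1

def enumC (c : Code) (s i : ℕ) : Bool := (evaln s c i).isSome
def cnt (l : List Bool) : ℕ := l.foldr (fun b acc => cond b (acc + 1) acc) 0
def strC (c : Code) (s n : ℕ) : Str := (List.range (n + 1)).map (enumC c s)
def countC (c : Code) (s n : ℕ) : ℕ := cnt (strC c s n)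
def gC (c : Code) (k : ℕ) : Part (Option Str) :=
  (Nat.rfind fun s => Part.some (decide (countC c s k.unpair.1 = k.unpair.2))).map
    fun s => some (strC c s k.unpair.1)
def UA (c : Code) : Interp := fun p _ => gC c (strToNat p)

theorem cnt_eq (l : List Bool) : cnt l = l.countP id := by
  induction l with
  | nil => rfl
  | cons b l ih =>
    simp only [cnt, List.foldr_cons] at ih ⊢
    cases b <;> simp [List.countP_cons, ih]

theorem enumC_primrec (c : Code) : Primrec₂ (enumC c) := by
  have h : Primrec fun p : ℕ × ℕ => evaln p.1 c p.2 :=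
    primrec_evaln.comp (Primrec.pair (Primrec.pair Primrec.fst (Primrec.const c)) Primrec.snd)
  exact (Primrec.option_isSome.comp h).to₂

theorem strC_primrec (c : Code) : Primrec₂ (strC c) := by
  exact Primrec.to₂ <| Primrec.list_map (α := ℕ × ℕ)
    (Primrec.list_range.comp (Primrec.succ.comp Primrec.snd))
    (((enumC_primrec c).comp (Primrec.fst.comp Primrec.fst) Primrec.snd).to₂)

theorem cnt_primrec : Primrec cnt := by
  have := Primrec.list_foldr (α := List Bool) (β := Bool) (σ := ℕ)
    (f := id) (g := fun _ => 0) (h := fun _ p => cond p.1 (p.2 + 1) p.2)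
    Primrec.id (Primrec.const 0)
    (Primrec.to₂ (Primrec.cond (Primrec.fst.comp Primrec.snd)
      (Primrec.succ.comp (Primrec.snd.comp Primrec.snd))
      (Primrec.snd.comp Primrec.snd)))
  exact this

theorem countC_primrec (c : Code) : Primrec₂ (countC c) :=
  (cnt_primrec.comp ((strC_primrec c).comp Primrec.fst Primrec.snd)).to₂

theorem gC_partrec (c : Code) : Partrec (gC c) := by
  have hb : Computable₂ fun (k s : ℕ) => decide (countC c s k.unpair.1 = k.unpair.2) := by
    have : Primrec₂ fun (k s : ℕ) => decide (countC c s k.unpair.1 = k.unpair.2) :=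
      Primrec.to₂ (PrimrecPred.decide <| Primrec.eq.comp
        ((countC_primrec c).comp Primrec.snd
          (Primrec.fst.comp (Primrec.unpair.comp Primrec.fst)))
        (Primrec.snd.comp (Primrec.unpair.comp Primrec.fst)))
    exact this.to_comp
  have hp : Partrec₂ fun (k s : ℕ) =>
      (Part.some (decide (countC c s k.unpair.1 = k.unpair.2)) : Part Bool) :=
    hb.partrec₂
  have hr : Partrec fun k : ℕ =>
      Nat.rfind fun s => Part.some (decide (countC c s k.unpair.1 = k.unpair.2)) :=
    Partrec.rfind hp
  have hm : Computable₂ fun (k s : ℕ) => (some (strC c s k.unpair.1) : Option Str) := by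
    have : Primrec₂ fun (k s : ℕ) => (some (strC c s k.unpair.1) : Option Str) :=
      Primrec.to₂ (Primrec.option_some.comp
        ((strC_primrec c).comp Primrec.snd
          (Primrec.fst.comp (Primrec.unpair.comp Primrec.fst))))
    exact this.to_comp
  exact hr.map hm

theorem UA_partrec (c : Code) : Partrec₂ (UA c) := by
  have : Partrec fun a : Str × Str => gC c (strToNat a.1) :=
    (gC_partrec c).comp (strToNat_primrec.comp Primrec.fst).to_comp
  exact this

/-- number of elements of `A` among `0..n` -/
noncomputable def mA (A : Set ℕ) (n : ℕ) : ℕ :=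
  (List.range (n + 1)).countP fun i => @decide (i ∈ A) (Classical.propDecidable _)

theorem countC_eq (c : Code) (s n : ℕ) :
    countC c s n = (List.range (n + 1)).countP (enumC c s) := by
  rw [countC, cnt_eq, strC, List.countP_map]
  rfl

theorem countP_pointwise {l : List ℕ} {p q : ℕ → Bool}
    (himp : ∀ i ∈ l, p i = true → q i = true)
    (hc : l.countP p = l.countP q) : ∀ i ∈ l, p i = q i := by
  induction l with
  | nil => intro i hi; simp at hi
  | cons a l ih =>
    have hle : l.countP p ≤ l.countP q :=
      List.countP_mono_left fun i hi => himp i (List.mem_cons_of_mem a hi)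
    rw [List.countP_cons, List.countP_cons] at hc
    have hpq : p a = q a ∧ l.countP p = l.countP q := by
      by_cases hp : p a = true
      · have hq := himp a (List.mem_cons_self (a := a) (l := l)) hp
        rw [hp, hq] at hc ⊢
        simp at hc
        exact ⟨rfl, by omega⟩
      · have hp' : p a = false := by simpa using hp
        by_cases hq : q a = true
        · rw [hp', hq] at hc; simp at hc; omega
        · have hq' : q a = false := by simpa using hq
          rw [hp', hq'] at hc ⊢
          simp at hc
          exact ⟨rfl, by omega⟩
    intro i hi
    rcases List.mem_cons.1 hi with rfl | hi
    · exact hpq.1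
    · exact ih (fun j hj => himp j (List.mem_cons_of_mem a hj)) hpq.2 i hi

theorem mem_UA (c : Code) (A : Set ℕ) (hc : ∀ i : ℕ, i ∈ A ↔ (c.eval i).Dom) (n : ℕ) :
    some (seg A n) ∈ UA c (natToStr (Nat.pair n (mA A n))) [] := by
  classical
  set χ : ℕ → Bool := fun i => @decide (i ∈ A) (Classical.propDecidable _) with hχ
  have hsound : ∀ s i, enumC c s i = true → i ∈ A := by
    intro s i h
    rw [enumC, Option.isSome_iff_exists] at h
    obtain ⟨x, hx⟩ := h
    have : x ∈ c.eval i := evaln_sound hx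
    exact (hc i).2 (Part.dom_iff_mem.2 ⟨x, this⟩)
  have hmono : ∀ {s s' i}, s ≤ s' → enumC c s i = true → enumC c s' i = true := by
    intro s s' i hss h
    rw [enumC, Option.isSome_iff_exists] at h ⊢
    obtain ⟨x, hx⟩ := h
    exact ⟨x, evaln_mono hss hx⟩
  have hcomplete : ∀ i, ∃ s, i ∈ A → enumC c s i = true := by
    intro i
    by_cases hi : i ∈ A
    · obtain ⟨x, hx⟩ := Part.dom_iff_mem.1 ((hc i).1 hi)
      obtain ⟨k, hk⟩ := evaln_complete.1 hx
      exact ⟨k, fun _ => by rw [enumC, Option.isSome_iff_exists]; exact ⟨x, hk⟩⟩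
    · exact ⟨0, fun h => absurd h hi⟩
  choose f hf using hcomplete
  set S := (Finset.range (n + 1)).sup f with hS
  have hSeq : ∀ i ∈ List.range (n + 1), enumC c S i = χ i := by
    intro i hi
    rw [List.mem_range] at hi
    by_cases hiA : i ∈ A
    · have : f i ≤ S := Finset.le_sup (Finset.mem_range.2 hi)
      rw [hmono this (hf i hiA)]
      simp [hχ, hiA]
    · have h1 : enumC c S i = false := by
        by_contra h
        exact hiA (hsound S i (by simpa using h))
      rw [h1]
      simp [hχ, hiA]
  have hScount : countC c S n = mA A n := by
    rw [countC_eq, mA]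
    exact List.countP_congr fun i hi => by rw [hSeq i hi]
  set q : ℕ →. Bool := fun s => Part.some (decide (countC c s n = mA A n)) with hq
  have hdom : (Nat.rfind q).Dom :=
    Nat.rfind_dom'.2 ⟨S, by simp [hq, hScount], fun {m} _ => trivial⟩
  set s₀ := (Nat.rfind q).get hdom with hs₀
  have hs₀mem : s₀ ∈ Nat.rfind q := Part.get_mem hdom
  have hs₀count : countC c s₀ n = mA A n := by
    have := Nat.rfind_spec hs₀mem
    simpa [hq] using this
  have hpt : ∀ i ∈ List.range (n + 1), enumC c s₀ i = χ i := by
    apply countP_pointwise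
    · intro i _ h
      simp only [hχ]
      exact decide_eq_true (hsound s₀ i h)
    · rw [← countC_eq, hs₀count, mA]
  have hstr : strC c s₀ n = seg A n := by
    rw [strC, seg]
    exact List.map_congr_left hpt
  show some (seg A n) ∈ gC c (strToNat (natToStr (Nat.pair n (mA A n))))
  rw [strToNat_natToStr]
  rw [gC, Nat.unpair_pair]
  rw [Part.mem_map_iff]
  exact ⟨s₀, hs₀mem, by rw [hstr]⟩

theorem mA_le (A : Set ℕ) (n : ℕ) : mA A n ≤ n + 1 := by
  rw [mA]
  simpa using List.countP_le_length (l := List.range (n + 1))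

theorem length_bound (n m : ℕ) (hm : m ≤ n + 1) :
    (natToStr (Nat.pair n m)).length ≤ 2 * Nat.log 2 n + 5 := by
  have hlen : (natToStr (Nat.pair n m)).length = Nat.size (Nat.pair n m + 1) - 1 := by
    rw [natToStr, List.length_dropLast, Nat.size_eq_bits_len]
  have hpair : Nat.pair n m + 1 ≤ (n + 2) * (n + 2) := by
    rw [Nat.pair]
    split <;> nlinarith
  set L := Nat.log 2 n with hL
  have h1 : n < 2 ^ (L + 1) := Nat.lt_pow_succ_log_self one_lt_two n
  have h2 : n + 2 < 2 ^ (L + 2) := by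
    have h2' : (2:ℕ) ≤ 2 ^ (L + 1) := by
      calc (2:ℕ) = 2 ^ 1 := rfl
        _ ≤ 2 ^ (L + 1) := Nat.pow_le_pow_right (by norm_num) (by omega)
    calc n + 2 < 2 ^ (L + 1) + 2 ^ (L + 1) := by omega
      _ = 2 ^ (L + 2) := by ring
  have h3 : Nat.pair n m + 1 < 2 ^ (2 * L + 4) := by
    calc Nat.pair n m + 1 ≤ (n + 2) * (n + 2) := hpair
      _ < 2 ^ (L + 2) * 2 ^ (L + 2) := by
          exact Nat.mul_lt_mul_of_lt_of_le h2 h2.le (by omega)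
      _ = 2 ^ (2 * L + 4) := by rw [← pow_add]; ring_nf
  have h4 : Nat.size (Nat.pair n m + 1) ≤ 2 * L + 4 := Nat.size_le.2 h3
  rw [hlen, hL] at *
  omega
end S4

theorem stmt4 (U : Interp) (hU : Optimal U) (A : Set ℕ) (hA : REset A) :
    ∃ c : ℕ, ∀ n : ℕ, KC U (seg A n) ≤ ((2 * Nat.log 2 n + c : ℕ) : ℕ∞) := by
  have hA' : Partrec fun a : ℕ => Part.assert (a ∈ A) fun _ => Part.some () := hA
  have hf : Partrec fun a : ℕ =>
      (Part.assert (a ∈ A) fun _ => Part.some ()).map fun _ => (0 : ℕ) :=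
    hA'.map ((Computable.const 0).comp Computable.fst).to₂
  have hnf : Nat.Partrec fun a =>
      (Part.assert (a ∈ A) fun _ => Part.some ()).map fun _ => (0 : ℕ) :=
    Partrec.nat_iff.1 hf
  obtain ⟨c, hc⟩ := Nat.Partrec.Code.exists_code.1 hnf
  have hcA : ∀ i : ℕ, i ∈ A ↔ (c.eval i).Dom := by
    intro i
    rw [hc]
    constructor
    · intro hi
      exact ⟨hi, trivial⟩
    · rintro ⟨hi, -⟩
      exact hi
  obtain ⟨c0, hKC, -, -⟩ := hU.2 (S4.UA c) (S4.UA_partrec c)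
  refine ⟨5 + c0, fun n => ?_⟩
  have hmem := S4.mem_UA c A hcA n
  have h1 : KC U (seg A n) ≤ KC (S4.UA c) (seg A n) + c0 := hKC _
  have h2 : KC (S4.UA c) (seg A n) ≤ ((natToStr (Nat.pair n (S4.mA A n))).length : ℕ∞) :=
    sInf_le ⟨_, hmem, rfl⟩
  have h3 : ((natToStr (Nat.pair n (S4.mA A n))).length : ℕ∞) ≤
      ((2 * Nat.log 2 n + 5 : ℕ) : ℕ∞) := by
    exact_mod_cast S4.length_bound n _ (S4.mA_le A n)
  calc KC U (seg A n) ≤ KC (S4.UA c) (seg A n) + c0 := h1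
    _ ≤ ((2 * Nat.log 2 n + 5 : ℕ) : ℕ∞) + c0 := add_le_add_left (h2.trans h3) _
    _ = ((2 * Nat.log 2 n + (5 + c0) : ℕ) : ℕ∞) := by push_cast; ring
end

section
/- There exists a recursively enumerable set A ⊆ ℕ and a constant c such that C(χ_A ↾ n) ≥ 2·log n − c for infinitely many n. (That is, there is an r.e. complex set, showing the 2 log n upper bound on initial-segment Kolmogorov complexity of r.e. sets is optimal.) -/
namespace Kummer
open Nat.Partrec (Code)
open Nat.Partrec.Code

/-- All binary strings of length exactly `n`. -/
def strsLen : ℕ → List Str := fun n =>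
  Nat.rec [[]] (fun _ ih => ih.flatMap fun p => [false :: p, true :: p]) n

/-- All binary strings of length `< L`. -/
def shortStrs (L : ℕ) : List Str := (List.range L).flatMap strsLen

/-- Membership in the stage-approximation coded by the list `L` of counters. -/
def memL (L : List ℕ) (x : ℕ) : Bool :=
  (List.range L.length).any fun k =>
    decide (2 ^ k ≤ x) && decide (x < 2 ^ k + L.getD k 0)

/-- Approximate characteristic segment. -/
def segL (L : List ℕ) (n : ℕ) : Str := (List.range (n + 1)).map (memL L)

/-- Coverage: some program of length `< 2k-1` outputs `σ` within `s` steps. -/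
def covP (e : Code) (s k : ℕ) (σ : Str) : Bool :=
  (shortStrs (2 * k - 1)).any fun p =>
    evaln s e (Encodable.encode (p, ([] : Str))) ==
      some (Encodable.encode (some σ : Option Str))

/-- One step of the construction. -/
def stepP (e : Code) (s : ℕ) (L : List ℕ) : List ℕ :=
  (List.range (L.length + 1)).map fun k =>
    bif decide (L.getD k 0 < 2 ^ k) &&
        ((List.range (2 ^ k)).all fun i => covP e s k (segL L (2 ^ k + i)))
    then L.getD k 0 + 1 else L.getD k 0

/-- The stage-`s` state of the construction. -/
def state (e : Code) : ℕ → List ℕ := fun s =>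
  Nat.rec [] (fun s' ih => stepP e s' ih) s

/-- The current counter of the `k`-th strategy. -/
def jj (e : Code) (s k : ℕ) : ℕ := (state e s).getD k 0

/-- The increment condition for strategy `k` at stage `s`. -/
def condC (e : Code) (s k : ℕ) : Bool :=
  decide (jj e s k < 2 ^ k) &&
    ((List.range (2 ^ k)).all fun i => covP e s k (segL (state e s) (2 ^ k + i)))

/-- The r.e. set constructed from the code `e`. -/
def AA (e : Code) : Set ℕ := {x | ∃ s, memL (state e s) x = true}

lemma length_state (e : Code) (s : ℕ) : (state e s).length = s := by
  induction s with
  | zero => rfl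
  | succ s ih => simp [state, stepP] at ih ⊢; simp [ih]

lemma jj_zero (e : Code) (k : ℕ) : jj e 0 k = 0 := rfl

lemma jj_eq_zero_of_le (e : Code) {s k : ℕ} (h : s ≤ k) : jj e s k = 0 := by
  unfold jj
  rw [List.getD_eq_default]
  rw [length_state]; exact h

lemma jj_succ (e : Code) {s k : ℕ} (h : k ≤ s) :
    jj e (s + 1) k = bif condC e s k then jj e s k + 1 else jj e s k := by
  have hlen : k < (List.range ((state e s).length + 1)).length := by
    simp [length_state]; omega
  show (state e (s+1)).getD k 0 = _
  have : state e (s+1) = stepP e s (state e s) := rfl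
  rw [this]
  unfold stepP
  rw [List.getD_eq_getElem _ _ (by simpa using hlen)]
  simp only [List.getElem_map, List.getElem_range]
  rfl

lemma jj_le (e : Code) (s k : ℕ) : jj e s k ≤ 2 ^ k := by
  induction s with
  | zero => simp [jj_zero]
  | succ s ih =>
    rcases le_or_gt (s+1) k with h | h
    · simp [jj_eq_zero_of_le e h]
    · rw [jj_succ e (by omega)]
      cases hc : condC e s k with
      | false => simpa using ih
      | true =>
        simp only [cond_true]
        have := of_decide_eq_true (Bool.and_elim_left hc)
        omega

lemma jj_mono_succ (e : Code) (s k : ℕ) : jj e s k ≤ jj e (s + 1) k := by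
  rcases le_or_gt (s+1) k with h | h
  · simp [jj_eq_zero_of_le e (le_trans (Nat.le_succ s) h)]
  · rw [jj_succ e (by omega)]; cases condC e s k <;> simp
lemma jj_mono (e : Code) (k : ℕ) : Monotone fun s => jj e s k :=
  monotone_nat_of_le_succ fun s => jj_mono_succ e s k

lemma jj_succ_le (e : Code) (s k : ℕ) : jj e (s + 1) k ≤ jj e s k + 1 := by
  rcases le_or_gt (s+1) k with h | h
  · simp [jj_eq_zero_of_le e h]
  · rw [jj_succ e (by omega)]; cases condC e s k <;> simp

lemma memL_iff (L : List ℕ) (x : ℕ) :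
    memL L x = true ↔ ∃ k, 2 ^ k ≤ x ∧ x < 2 ^ k + L.getD k 0 := by
  unfold memL
  simp only [List.any_eq_true, List.mem_range, Bool.and_eq_true, decide_eq_true_eq]
  constructor
  · rintro ⟨k, _, h1, h2⟩; exact ⟨k, h1, h2⟩
  · rintro ⟨k, h1, h2⟩
    refine ⟨k, ?_, h1, h2⟩
    by_contra hk
    rw [List.getD_eq_default _ _ (by omega)] at h2
    omega

lemma memL_state_iff (e : Code) (s x : ℕ) :
    memL (state e s) x = true ↔ ∃ k, 2 ^ k ≤ x ∧ x < 2 ^ k + jj e s k :=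
  memL_iff _ x

lemma interval_eq {k k' x j j' : ℕ} (hj : j ≤ 2 ^ k) (hj' : j' ≤ 2 ^ k')
    (h1 : 2 ^ k ≤ x) (h2 : x < 2 ^ k + j) (h1' : 2 ^ k' ≤ x) (h2' : x < 2 ^ k' + j') :
    k = k' := by
  have e1 : Nat.log 2 x = k :=
    Nat.log_eq_of_pow_le_of_lt_pow h1 (by rw [pow_succ]; omega)
  have e2 : Nat.log 2 x = k' :=
    Nat.log_eq_of_pow_le_of_lt_pow h1' (by rw [pow_succ]; omega)
  omega

lemma memL_interval (e : Code) {s k u : ℕ} (hu : u < 2 ^ k) :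
    memL (state e s) (2 ^ k + u) = true ↔ u < jj e s k := by
  rw [memL_state_iff]
  constructor
  · rintro ⟨k', h1, h2⟩
    have hk : k = k' := interval_eq (j := u + 1) (j' := jj e s k')
      (by omega) (jj_le e s k') (by omega) (by omega) h1 h2
    subst hk
    omega
  · intro h; exact ⟨k, by omega, by omega⟩

lemma memL_mono (e : Code) {s s' x : ℕ} (h : s ≤ s')
    (hx : memL (state e s) x = true) : memL (state e s') x = true := by
  rw [memL_state_iff] at hx ⊢
  obtain ⟨k, h1, h2⟩ := hx
  exact ⟨k, h1, by have := jj_mono e k h; simp at this; omega⟩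

lemma mem_strsLen {p : Str} {n : ℕ} : p ∈ strsLen n ↔ p.length = n := by
  induction n generalizing p with
  | zero => simp [strsLen, List.length_eq_zero_iff]
  | succ n ih =>
    show p ∈ (strsLen n).flatMap _ ↔ _
    simp only [List.mem_flatMap, List.mem_cons, List.mem_singleton, List.not_mem_nil, or_false]
    constructor
    · rintro ⟨q, hq, rfl | rfl⟩ <;> simp [ih.1 hq]
    · intro hp
      match p, hp with
      | b :: q, hp =>
        refine ⟨q, ih.2 (by simpa using hp), ?_⟩
        cases b <;> simp

lemma flatMap_two_length (l : List Str) :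
    (l.flatMap fun p => [false :: p, true :: p]).length = 2 * l.length := by
  induction l with
  | nil => rfl
  | cons a l ih => simp [ih]; omega

lemma length_strsLen (n : ℕ) : (strsLen n).length = 2 ^ n := by
  induction n with
  | zero => rfl
  | succ n ih =>
    show ((strsLen n).flatMap _).length = _
    rw [flatMap_two_length, ih, pow_succ]
    omega

lemma mem_shortStrs {p : Str} {L : ℕ} : p ∈ shortStrs L ↔ p.length < L := by
  simp [shortStrs, List.mem_flatMap, mem_strsLen]

lemma length_shortStrs (L : ℕ) : (shortStrs L).length = 2 ^ L - 1 := by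
  unfold shortStrs
  rw [List.length_flatMap]
  induction L with
  | zero => rfl
  | succ L ih =>
    rw [List.range_succ]
    simp only [List.map_append, List.sum_append, List.map_cons, List.map_nil, List.sum_cons,
      List.sum_nil, add_zero]
    rw [ih, length_strsLen, pow_succ]
    have : 1 ≤ 2 ^ L := Nat.one_le_two_pow
    omega

lemma exists_limit (e : Code) (k : ℕ) : ∃ s₀, ∀ s, s₀ ≤ s → jj e s k = jj e s₀ k := by
  have hbd : BddAbove (Set.range fun s => jj e s k) := ⟨2 ^ k, by rintro x ⟨s, rfl⟩; exact jj_le e s k⟩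
  obtain ⟨s₀, hs₀⟩ := Nat.sSup_mem (Set.range_nonempty _) hbd
  refine ⟨s₀, fun s hs => le_antisymm ?_ (jj_mono e k hs)⟩
  exact le_of_le_of_eq (le_csSup hbd ⟨s, rfl⟩) hs₀.symm

lemma covP_mono (e : Code) {s s' k : ℕ} {σ : Str} (h : s ≤ s')
    (hc : covP e s k σ = true) : covP e s' k σ = true := by
  unfold covP at hc ⊢
  simp only [List.any_eq_true, beq_iff_eq] at hc ⊢
  obtain ⟨p, hp, hev⟩ := hc
  exact ⟨p, hp, evaln_mono h hev⟩

lemma segL_length (L : List ℕ) (n : ℕ) : (segL L n).length = n + 1 := by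
  simp [segL]

lemma segL_get (L : List ℕ) {n x : ℕ} (hx : x < n + 1) :
    (segL L n)[x]'(by simp [segL_length]; omega) = memL L x := by
  simp [segL]

lemma segL_get? (L : List ℕ) {n x : ℕ} (hx : x < n + 1) :
    (segL L n)[x]? = some (memL L x) := by
  rw [List.getElem?_eq_getElem (by simp [segL_length]; omega)]
  rw [segL_get L hx]

lemma jj_attains (e : Code) (k : ℕ) {s v : ℕ} (hv : v ≤ jj e s k) :
    ∃ s', jj e s' k = v := by
  induction s with
  | zero => exact ⟨0, by simp [jj_zero] at hv ⊢; omega⟩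
  | succ s ih =>
    rcases le_or_gt v (jj e s k) with h | h
    · exact ih h
    · exact ⟨s + 1, by have := jj_succ_le e s k; omega⟩

lemma incr_stage (e : Code) {k t : ℕ} (h : ∃ s, jj e s k = t + 1) :
    ∃ s, jj e s k = t ∧ condC e s k = true := by
  classical
  have hs' : jj e (Nat.find h) k = t + 1 := Nat.find_spec h
  have hs'0 : Nat.find h ≠ 0 := by
    intro h0
    rw [h0, jj_zero] at hs'
    omega
  obtain ⟨s, hseq⟩ : ∃ s, Nat.find h = s + 1 := ⟨Nat.find h - 1, by omega⟩
  have hne : jj e s k ≠ t + 1 := Nat.find_min h (by omega)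
  rw [hseq] at hs'
  have h1 : jj e s k ≤ jj e (s + 1) k := jj_mono_succ e s k
  have h2 : jj e (s + 1) k ≤ jj e s k + 1 := jj_succ_le e s k
  have ht : jj e s k = t := by omega
  have hks : k ≤ s := by
    by_contra hk
    have := jj_eq_zero_of_le e (k := k) (s := s + 1) (by omega)
    omega
  refine ⟨s, ht, ?_⟩
  have hsucc := jj_succ e hks
  cases hc : condC e s k with
  | true => rfl
  | false => rw [hc] at hsucc; simp at hsucc; omega

lemma condC_cover {e : Code} {s k : ℕ} (h : condC e s k = true) :
    jj e s k < 2 ^ k ∧ ∀ i < 2 ^ k, ∃ p : Str, p.length < 2 * k - 1 ∧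
      evaln s e (Encodable.encode (p, ([] : Str))) =
        some (Encodable.encode (some (segL (state e s) (2 ^ k + i)) : Option Str)) := by
  unfold condC at h
  rw [Bool.and_eq_true, decide_eq_true_eq, List.all_eq_true] at h
  obtain ⟨h1, h2⟩ := h
  refine ⟨h1, fun i hi => ?_⟩
  have := h2 i (List.mem_range.2 hi)
  unfold covP at this
  rw [List.any_eq_true] at this
  obtain ⟨p, hp, hev⟩ := this
  exact ⟨p, mem_shortStrs.1 hp, beq_iff_eq.1 hev⟩

section Sem

variable {U : Interp} {e : Code}
  (he : ∀ p : Str, eval e (Encodable.encode (p, ([] : Str))) =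
    (U p []).map Encodable.encode)

include he

lemma output_unique {s s' : ℕ} {p : Str} {σ σ' : Str}
    (h : evaln s e (Encodable.encode (p, ([] : Str))) =
      some (Encodable.encode (some σ : Option Str)))
    (h' : evaln s' e (Encodable.encode (p, ([] : Str))) =
      some (Encodable.encode (some σ' : Option Str))) : σ = σ' := by
  have m1 : Encodable.encode (some σ : Option Str) ∈ eval e (Encodable.encode (p, ([] : Str))) :=
    evaln_sound h
  have m2 : Encodable.encode (some σ' : Option Str) ∈ eval e (Encodable.encode (p, ([] : Str))) :=
    evaln_sound h'
  have := Part.mem_unique m1 m2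
  have h2 : (some σ : Option Str) = some σ' := Encodable.encode_injective this
  exact Option.some_injective _ h2

lemma no_full {k : ℕ} (hk : 1 ≤ k) : ¬ ∃ s, jj e s k = 2 ^ k := by
  classical
  rintro ⟨send, hsend⟩
  set m := 2 ^ k with hm
  clear_value m
  -- for each t < m there is a stage where the counter is t and the condition fires
  have hstg : ∀ t < m, ∃ s, jj e s k = t ∧ condC e s k = true := by
    intro t ht
    exact incr_stage e (jj_attains e k (s := send) (by omega))
  choose stg hstg1 hstg2 using hstg
  -- for each t ≤ i < m choose a short program computing the stage-(stg t) segment up to 2^k+i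
  have hP : ∀ t (ht : t < m), ∀ i < m, ∃ p : Str, p.length < 2 * k - 1 ∧
      evaln (stg t ht) e (Encodable.encode (p, ([] : Str))) =
        some (Encodable.encode (some (segL (state e (stg t ht)) (2 ^ k + i)) : Option Str)) :=
    fun t ht i hi => (condC_cover (hstg2 t ht)).2 i (by omega)
  choose P hP1 hP2 using hP
  -- injectivity
  have hinj : ∀ (t i : ℕ) (ht : t < m) (hi : i < m) (t' i' : ℕ) (ht' : t' < m) (hi' : i' < m),
      t ≤ i → t' ≤ i' → P t ht i hi = P t' ht' i' hi' → t = t' ∧ i = i' := by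
    intro t i ht hi t' i' ht' hi' hti hti' hPP
    have hσ : segL (state e (stg t ht)) (2 ^ k + i) = segL (state e (stg t' ht')) (2 ^ k + i') :=
      output_unique he (hP2 t ht i hi) (hPP ▸ hP2 t' ht' i' hi')
    have hii : i = i' := by
      have := congrArg List.length hσ
      rw [segL_length, segL_length] at this
      omega
    subst hii
    refine ⟨?_, rfl⟩
    by_contra htne
    -- wlog t < t'
    rcases Nat.lt_or_ge t t' with hlt | hge
    · have hg := congrArg (fun l => l[2 ^ k + t]?) hσ
      rw [segL_get? _ (by omega), segL_get? _ (by omega)] at hg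
      have heq : memL (state e (stg t ht)) (2 ^ k + t) = memL (state e (stg t' ht')) (2 ^ k + t) :=
        Option.some_injective _ hg
      have hb1 : memL (state e (stg t ht)) (2 ^ k + t) = true ↔ t < jj e (stg t ht) k :=
        memL_interval e (by omega)
      have hb2 : memL (state e (stg t' ht')) (2 ^ k + t) = true ↔ t < jj e (stg t' ht') k :=
        memL_interval e (by omega)
      rw [hstg1 t ht] at hb1
      rw [hstg1 t' ht'] at hb2
      have hfalse : memL (state e (stg t ht)) (2 ^ k + t) = false := by
        cases hbb : memL (state e (stg t ht)) (2 ^ k + t) with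
        | false => rfl
        | true => exact absurd (hb1.1 hbb) (by omega)
      have htrue : memL (state e (stg t' ht')) (2 ^ k + t) = true := hb2.2 hlt
      rw [hfalse, htrue] at heq
      exact absurd heq (by decide)
    · have hlt : t' < t := by omega
      have hg := congrArg (fun l => l[2 ^ k + t']?) hσ
      rw [segL_get? _ (by omega), segL_get? _ (by omega)] at hg
      have heq : memL (state e (stg t ht)) (2 ^ k + t') =
          memL (state e (stg t' ht')) (2 ^ k + t') :=
        Option.some_injective _ hg
      have hb1 : memL (state e (stg t ht)) (2 ^ k + t') = true ↔ t' < jj e (stg t ht) k :=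
        memL_interval e (by omega)
      have hb2 : memL (state e (stg t' ht')) (2 ^ k + t') = true ↔ t' < jj e (stg t' ht') k :=
        memL_interval e (by omega)
      rw [hstg1 t ht] at hb1
      rw [hstg1 t' ht'] at hb2
      have hfalse : memL (state e (stg t' ht')) (2 ^ k + t') = false := by
        cases hbb : memL (state e (stg t' ht')) (2 ^ k + t') with
        | false => rfl
        | true => exact absurd (hb2.1 hbb) (by omega)
      have htrue : memL (state e (stg t ht)) (2 ^ k + t') = true := hb1.2 hlt
      rw [hfalse, htrue] at heq
      exact absurd heq (by decide)
  -- counting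
  classical
  let D : Finset (Σ _ : ℕ, ℕ) := (Finset.range m).sigma fun i => Finset.range (i + 1)
  let f : (Σ _ : ℕ, ℕ) → Str := fun q =>
    if h : q.1 < m ∧ q.2 < m then P q.2 h.2 q.1 h.1 else []
  have hmem : ∀ q ∈ D, f q ∈ (shortStrs (2 * k - 1)).toFinset := by
    rintro ⟨i, t⟩ hq
    simp only [D, Finset.mem_sigma, Finset.mem_range] at hq
    have h : i < m ∧ t < m := ⟨hq.1, by omega⟩
    simp only [f, dif_pos h]
    rw [List.mem_toFinset]
    exact mem_shortStrs.2 (hP1 t h.2 i h.1)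
  have hInj : Set.InjOn f D := by
    rintro ⟨i, t⟩ hq ⟨i', t'⟩ hq' hfq
    simp only [D, Finset.mem_coe, Finset.mem_sigma, Finset.mem_range] at hq hq'
    have h : i < m ∧ t < m := ⟨hq.1, by omega⟩
    have h' : i' < m ∧ t' < m := ⟨hq'.1, by omega⟩
    simp only [f, dif_pos h, dif_pos h'] at hfq
    obtain ⟨e1, e2⟩ := hinj t i h.2 h.1 t' i' h'.2 h'.1 (by omega) (by omega) hfq
    simp [e1, e2]
  have hcard := Finset.card_le_card_of_injOn f hmem hInj
  have hD : D.card = ∑ i ∈ Finset.range m, (i + 1) := by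
    simp [D, Finset.card_sigma]
  have hm1 : 1 ≤ m := by rw [hm]; exact Nat.one_le_two_pow
  have hsum : 2 * D.card = m * m + m := by
    have ha : ∑ i ∈ Finset.range m, (i + 1) = (∑ i ∈ Finset.range m, i) + m := by
      rw [Finset.sum_add_distrib]
      simp
    have hb := Finset.sum_range_id_mul_two m
    have hc : m * (m - 1) = m * m - m := by
      obtain ⟨c, rfl⟩ := Nat.exists_eq_add_of_le hm1
      have hx : (1 + c) * (1 + c) = (1 + c) * c + (1 + c) := by ring
      have hy : 1 + c - 1 = c := by omega
      rw [hy]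
      omega
    have hmm : m ≤ m * m := Nat.le_mul_of_pos_left m (by omega)
    rw [hD, ha]
    omega
  have htf : ((shortStrs (2 * k - 1)).toFinset).card ≤ 2 ^ (2 * k - 1) - 1 := by
    calc ((shortStrs (2 * k - 1)).toFinset).card ≤ (shortStrs (2 * k - 1)).length :=
          List.toFinset_card_le _
      _ = 2 ^ (2 * k - 1) - 1 := length_shortStrs _
  have hpow : 2 * 2 ^ (2 * k - 1) = m * m := by
    rw [hm, ← pow_add, ← pow_succ']
    congr 1
    omega
  have h1 : 1 ≤ 2 ^ (2 * k - 1) := Nat.one_le_two_pow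
  have hmm : m ≤ m * m := Nat.le_mul_of_pos_left m (by omega)
  omega

omit he in
lemma exists_stab (e : Code) (k : ℕ) :
    ∃ S, ∀ k' ≤ k, ∀ s, S ≤ s → jj e s k' = jj e S k' := by
  classical
  choose L hL using exists_limit e
  refine ⟨(Finset.range (k + 1)).sup L, fun k' hk' s hs => ?_⟩
  have hLk : L k' ≤ (Finset.range (k + 1)).sup L :=
    Finset.le_sup (Finset.mem_range.2 (by omega))
  rw [hL k' s (le_trans hLk hs), hL k' _ hLk]

omit he in
lemma memL_stab {e : Code} {k S : ℕ}
    (hS : ∀ k' ≤ k, ∀ s, S ≤ s → jj e s k' = jj e S k')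
    {x : ℕ} (hx : x < 2 ^ (k + 1)) {s : ℕ} (hs : S ≤ s) :
    memL (state e s) x = memL (state e S) x := by
  have key : ∀ {s'}, S ≤ s' →
      (memL (state e s') x = true ↔ ∃ k', 2 ^ k' ≤ x ∧ x < 2 ^ k' + jj e S k') := by
    intro s' hs'
    rw [memL_state_iff]
    constructor
    · rintro ⟨k', h1, h2⟩
      have hk' : k' ≤ k := by
        by_contra hgt
        have : 2 ^ (k + 1) ≤ 2 ^ k' := Nat.pow_le_pow_right (by norm_num) (by omega)
        omega
      rw [hS k' hk' s' hs'] at h2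
      exact ⟨k', h1, h2⟩
    · rintro ⟨k', h1, h2⟩
      have hk' : k' ≤ k := by
        by_contra hgt
        have : 2 ^ (k + 1) ≤ 2 ^ k' := Nat.pow_le_pow_right (by norm_num) (by omega)
        omega
      rw [← hS k' hk' s' hs'] at h2
      exact ⟨k', h1, h2⟩
  have h1 := key hs
  have h2 := key (le_refl S)
  cases hb : memL (state e S) x with
  | true => exact h1.2 (h2.1 hb)
  | false =>
    cases hb' : memL (state e s) x with
    | false => rfl
    | true =>
      have hcontra := h2.2 (h1.1 hb')
      rw [hb] at hcontra
      exact hcontra.symm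

omit he in
lemma segL_stab {e : Code} {k S : ℕ}
    (hS : ∀ k' ≤ k, ∀ s, S ≤ s → jj e s k' = jj e S k')
    {n : ℕ} (hn : n < 2 ^ (k + 1)) {s : ℕ} (hs : S ≤ s) :
    segL (state e s) n = segL (state e S) n := by
  unfold segL
  refine List.map_congr_left fun x hx => ?_
  rw [List.mem_range] at hx
  exact memL_stab hS (by omega) hs

omit he in
lemma mem_AA_iff {e : Code} {k S : ℕ}
    (hS : ∀ k' ≤ k, ∀ s, S ≤ s → jj e s k' = jj e S k')
    {x : ℕ} (hx : x < 2 ^ (k + 1)) :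
    x ∈ AA e ↔ memL (state e S) x = true := by
  constructor
  · rintro ⟨s, hs⟩
    have h1 : memL (state e (max s S)) x = true := memL_mono e (le_max_left _ _) hs
    rw [memL_stab hS hx (le_max_right _ _)] at h1
    exact h1
  · intro h
    exact ⟨S, h⟩

omit he in
lemma seg_AA_eq {e : Code} {k S : ℕ}
    (hS : ∀ k' ≤ k, ∀ s, S ≤ s → jj e s k' = jj e S k')
    {n : ℕ} (hn : n < 2 ^ (k + 1)) :
    seg (AA e) n = segL (state e S) n := by
  unfold seg segL
  refine List.map_congr_left fun x hx => ?_
  rw [List.mem_range] at hx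
  have hiff := mem_AA_iff hS (x := x) (by omega)
  cases hb : memL (state e S) x with
  | true => exact @decide_eq_true _ (Classical.propDecidable _) (hiff.2 hb)
  | false =>
    exact @decide_eq_false _ (Classical.propDecidable _) fun hmem => by
      simp [hiff.1 hmem] at hb


lemma main_k {k : ℕ} (hk : 1 ≤ k) :
    ∃ n, 2 ^ k ≤ n ∧ n < 2 ^ (k + 1) ∧
      ∀ p : Str, some (seg (AA e) n) ∈ U p [] → 2 * k - 1 ≤ p.length := by
  classical
  obtain ⟨S, hS⟩ := exists_stab e k
  have hJ : jj e S k < 2 ^ k := by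
    rcases lt_or_ge (jj e S k) (2 ^ k) with h | h
    · exact h
    · exact absurd ⟨S, le_antisymm (jj_le e S k) h⟩ (no_full he hk)
  have hbad : ∃ i < 2 ^ k, ∀ s, S ≤ s →
      covP e s k (segL (state e S) (2 ^ k + i)) = false := by
    by_contra hall
    push_neg at hall
    have hall' : ∀ i, ∃ s, i < 2 ^ k →
        S ≤ s ∧ covP e s k (segL (state e S) (2 ^ k + i)) = true := by
      intro i
      by_cases hi : i < 2 ^ k
      · obtain ⟨s, hs1, hs2⟩ := hall i hi
        refine ⟨s, fun _ => ⟨hs1, ?_⟩⟩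
        cases hbb : covP e s k (segL (state e S) (2 ^ k + i)) with
        | true => rfl
        | false => exact absurd hbb hs2
      · exact ⟨0, fun h => absurd h hi⟩
    choose w hw using hall'
    set s' := max (max S k) ((Finset.range (2 ^ k)).sup w) with hs'
    have hSs' : S ≤ s' := le_trans (le_max_left _ _) (le_max_left _ _)
    have hks' : k ≤ s' := le_trans (le_max_right _ _) (le_max_left _ _)
    have hcond : condC e s' k = true := by
      unfold condC
      rw [Bool.and_eq_true, decide_eq_true_eq, List.all_eq_true]
      constructor
      · rw [hS k (le_refl k) s' hSs']
        exact hJ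
      · intro i hi
        rw [List.mem_range] at hi
        have hwi := hw i hi
        have hmono : w i ≤ s' :=
          le_trans (Finset.le_sup (Finset.mem_range.2 hi)) (le_max_right _ _)
        have hcov := covP_mono e hmono hwi.2
        rw [segL_stab hS (n := 2 ^ k + i) (by rw [pow_succ]; omega) hSs'] 
        exact hcov
    have h1 : jj e (s' + 1) k = jj e s' k + 1 := by
      rw [jj_succ e hks', hcond]
      rfl
    have h2 : jj e (s' + 1) k = jj e S k := hS k (le_refl k) (s' + 1) (by omega)
    have h3 : jj e s' k = jj e S k := hS k (le_refl k) s' hSs'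
    omega
  obtain ⟨i, hi, hbadcov⟩ := hbad
  refine ⟨2 ^ k + i, by omega, by rw [pow_succ]; omega, fun p hp => ?_⟩
  by_contra hlen
  push_neg at hlen
  have hseg : seg (AA e) (2 ^ k + i) = segL (state e S) (2 ^ k + i) :=
    seg_AA_eq hS (by rw [pow_succ]; omega)
  rw [hseg] at hp
  set σ := segL (state e S) (2 ^ k + i) with hσdef
  have hmem : Encodable.encode (some σ : Option Str) ∈
      eval e (Encodable.encode (p, ([] : Str))) := by
    rw [he p]
    exact Part.mem_map _ hp
  obtain ⟨sW, hsW⟩ := evaln_complete.1 hmem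
  have hcovtrue : covP e (max sW S) k σ = true := by
    unfold covP
    rw [List.any_eq_true]
    refine ⟨p, mem_shortStrs.2 hlen, ?_⟩
    rw [beq_iff_eq]
    exact evaln_mono (le_max_left _ _) hsW
  rw [hbadcov (max sW S) (le_max_right _ _)] at hcovtrue
  exact Bool.noConfusion hcovtrue

end Sem

section Computability

lemma any_eq_foldr {β : Type*} (l : List β) (p : β → Bool) :
    l.any p = l.foldr (fun b r => p b || r) false := by
  induction l with
  | nil => rfl
  | cons a l ih => simp [ih]

lemma all_eq_not_any (l : List ℕ) (p : ℕ → Bool) :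
    l.all p = !(l.any fun b => !(p b)) := by
  induction l with
  | nil => rfl
  | cons a l ih => simp [ih]

lemma primrec_any {α β : Type} [Primcodable α] [Primcodable β]
    {f : α → List β} {g : α → β → Bool} (hf : Primrec f) (hg : Primrec₂ g) :
    Primrec fun a => (f a).any (g a) := by
  have hh : Primrec₂ fun (a : α) (q : β × Bool) => g a q.1 || q.2 :=
    Primrec.or.comp (hg.comp Primrec.fst (Primrec.fst.comp Primrec.snd))
      (Primrec.snd.comp Primrec.snd)
  exact (Primrec.list_foldr hf (Primrec.const false) hh).of_eq fun a =>
    (any_eq_foldr (f a) (g a)).symm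

lemma primrec_all {α : Type} [Primcodable α]
    {f : α → List ℕ} {g : α → ℕ → Bool} (hf : Primrec f) (hg : Primrec₂ g) :
    Primrec fun a => (f a).all (g a) := by
  have : Primrec fun a => !((f a).any fun b => !(g a b)) :=
    Primrec.not.comp (primrec_any hf (Primrec.not.comp hg))
  exact this.of_eq fun a => (all_eq_not_any (f a) (g a)).symm

lemma hpow2 : Primrec fun k : ℕ => 2 ^ k :=
  (Primrec₂.unpaired'.1 Nat.Primrec.pow).comp (Primrec.const 2) Primrec.id

lemma hstrsLen : Primrec strsLen := by
  have hg2 : Primrec₂ fun (q : ℕ × List Str) (p : Str) => [false :: p, true :: p] := by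
    have inner : Primrec fun u : (ℕ × List Str) × Str => [true :: u.2] :=
      Primrec.list_cons.comp (Primrec.list_cons.comp (Primrec.const true) Primrec.snd)
        (Primrec.const [])
    exact (Primrec.list_cons.comp
      (Primrec.list_cons.comp (Primrec.const false) Primrec.snd) inner).to₂
  have hf : Primrec₂ fun (n : ℕ) (ih : List Str) => ih.flatMap fun p => [false :: p, true :: p] :=
    (Primrec.list_flatMap Primrec.snd hg2).to₂
  exact (Primrec.nat_rec₁ [[]] hf).of_eq fun n => rfl

lemma hshort : Primrec shortStrs :=
  Primrec.list_flatMap Primrec.list_range (hstrsLen.comp Primrec.snd).to₂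

lemma hmemL : Primrec₂ memL := by
  have hf : Primrec fun a : List ℕ × ℕ => List.range a.1.length :=
    Primrec.list_range.comp (Primrec.list_length.comp Primrec.fst)
  have hg : Primrec₂ fun (a : List ℕ × ℕ) (k : ℕ) =>
      (decide (2 ^ k ≤ a.2) && decide (a.2 < 2 ^ k + a.1.getD k 0)) := by
    have hx : Primrec fun q : (List ℕ × ℕ) × ℕ => q.1.2 := Primrec.snd.comp Primrec.fst
    have hL : Primrec fun q : (List ℕ × ℕ) × ℕ => q.1.1 := Primrec.fst.comp Primrec.fst
    have hk : Primrec fun q : (List ℕ × ℕ) × ℕ => q.2 := Primrec.snd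
    have c1 := Primrec.nat_le.comp (hpow2.comp hk) hx
    have hgetD := (Primrec.list_getD 0).comp hL hk
    have c2 := Primrec.nat_lt.comp hx (Primrec.nat_add.comp (hpow2.comp hk) hgetD)
    exact (Primrec.and.comp c1.decide c2.decide).to₂
  exact (primrec_any hf hg).to₂

lemma hsegL : Primrec₂ segL := by
  have hf : Primrec fun a : List ℕ × ℕ => List.range (a.2 + 1) :=
    Primrec.list_range.comp (Primrec.succ.comp Primrec.snd)
  have hg : Primrec₂ fun (a : List ℕ × ℕ) (x : ℕ) => memL a.1 x :=
    (hmemL.comp (Primrec.fst.comp Primrec.fst) Primrec.snd).to₂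
  exact (Primrec.list_map hf hg).to₂

lemma hcovP (e : Code) : Primrec fun q : (ℕ × ℕ) × Str => covP e q.1.1 q.1.2 q.2 := by
  have hf : Primrec fun q : (ℕ × ℕ) × Str => shortStrs (2 * q.1.2 - 1) :=
    hshort.comp (Primrec.nat_sub.comp
      (Primrec.nat_mul.comp (Primrec.const 2) (Primrec.snd.comp Primrec.fst))
      (Primrec.const 1))
  have hg : Primrec₂ fun (q : (ℕ × ℕ) × Str) (p : Str) =>
      (Nat.Partrec.Code.evaln q.1.1 e (Encodable.encode (p, ([] : Str))) ==
        some (Encodable.encode (some q.2 : Option Str))) := by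
    have hs : Primrec fun u : ((ℕ × ℕ) × Str) × Str => u.1.1.1 :=
      Primrec.fst.comp (Primrec.fst.comp Primrec.fst)
    have hσ : Primrec fun u : ((ℕ × ℕ) × Str) × Str => u.1.2 :=
      Primrec.snd.comp Primrec.fst
    have hp : Primrec fun u : ((ℕ × ℕ) × Str) × Str => u.2 := Primrec.snd
    have hl : Primrec fun u : ((ℕ × ℕ) × Str) × Str =>
        Nat.Partrec.Code.evaln u.1.1.1 e (Encodable.encode (u.2, ([] : Str))) :=
      Nat.Partrec.Code.primrec_evaln.comp
        ((hs.pair (Primrec.const e)).pair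
          (Primrec.encode.comp (hp.pair (Primrec.const ([] : Str)))))
    have hr : Primrec fun u : ((ℕ × ℕ) × Str) × Str =>
        (some (Encodable.encode (some u.1.2 : Option Str)) : Option ℕ) :=
      Primrec.option_some.comp (Primrec.encode.comp (Primrec.option_some.comp hσ))
    have hbeq : ∀ x y : Option ℕ, (@BEq.beq _ instBEqOfDecidableEq x y) = (x == y) := by
      intro x y
      by_cases h : x = y
      · subst h
        have h1 : (@BEq.beq _ instBEqOfDecidableEq x x) = true := by
          show decide (x = x) = true
          simp
        rw [h1, beq_self_eq_true]
      · have h1 : (@BEq.beq _ instBEqOfDecidableEq x y) = false := by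
          show decide (x = y) = false
          simpa using h
        rw [h1]
        exact (beq_eq_false_iff_ne.mpr h).symm
    exact ((Primrec.beq.comp hl hr).to₂).of_eq fun u p => hbeq _ _
  exact (primrec_any hf hg).of_eq fun q => rfl

lemma hstep (e : Code) : Primrec₂ (stepP e) := by
  have hf : Primrec fun a : ℕ × List ℕ => List.range (a.2.length + 1) :=
    Primrec.list_range.comp (Primrec.succ.comp (Primrec.list_length.comp Primrec.snd))
  have hg : Primrec₂ fun (a : ℕ × List ℕ) (k : ℕ) =>
      bif decide (a.2.getD k 0 < 2 ^ k) &&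
          ((List.range (2 ^ k)).all fun i => covP e a.1 k (segL a.2 (2 ^ k + i)))
      then a.2.getD k 0 + 1 else a.2.getD k 0 := by
    have hL : Primrec fun q : (ℕ × List ℕ) × ℕ => q.1.2 := Primrec.snd.comp Primrec.fst
    have hk : Primrec fun q : (ℕ × List ℕ) × ℕ => q.2 := Primrec.snd
    have hj : Primrec fun q : (ℕ × List ℕ) × ℕ => q.1.2.getD q.2 0 :=
      (Primrec.list_getD 0).comp hL hk
    have hc1 := Primrec.nat_lt.comp hj (hpow2.comp hk)
    have hfi : Primrec fun q : (ℕ × List ℕ) × ℕ => List.range (2 ^ q.2) :=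
      Primrec.list_range.comp (hpow2.comp hk)
    have hgi : Primrec₂ fun (q : (ℕ × List ℕ) × ℕ) (i : ℕ) =>
        covP e q.1.1 q.2 (segL q.1.2 (2 ^ q.2 + i)) := by
      have hs' : Primrec fun r : ((ℕ × List ℕ) × ℕ) × ℕ => r.1.1.1 :=
        Primrec.fst.comp (Primrec.fst.comp Primrec.fst)
      have hk' : Primrec fun r : ((ℕ × List ℕ) × ℕ) × ℕ => r.1.2 :=
        Primrec.snd.comp Primrec.fst
      have hL' : Primrec fun r : ((ℕ × List ℕ) × ℕ) × ℕ => r.1.1.2 :=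
        Primrec.snd.comp (Primrec.fst.comp Primrec.fst)
      have hσ : Primrec fun r : ((ℕ × List ℕ) × ℕ) × ℕ =>
          segL r.1.1.2 (2 ^ r.1.2 + r.2) :=
        hsegL.comp hL' (Primrec.nat_add.comp (hpow2.comp hk') Primrec.snd)
      exact ((hcovP e).comp ((hs'.pair hk').pair hσ)).to₂
    have hall := primrec_all hfi hgi
    exact (Primrec.cond (Primrec.and.comp hc1.decide hall) (Primrec.succ.comp hj) hj).to₂
  exact ((Primrec.list_map hf hg).of_eq fun a => rfl).to₂

lemma hstate (e : Code) : Primrec (state e) :=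
  (Primrec.nat_rec₁ [] (hstep e)).of_eq fun s => rfl

end Computability

lemma re_AA (e : Code) : REset (AA e) := by
  have hmemFn : Primrec₂ fun (x s : ℕ) => memL (state e s) x :=
    hmemL.comp ((hstate e).comp Primrec.snd) Primrec.fst
  have hcomp : Computable₂ fun (x s : ℕ) => memL (state e s) x := hmemFn.to_comp
  have hpart : Partrec fun x : ℕ => Nat.rfind fun s => Part.some (memL (state e s) x) := by
    apply Partrec.rfind
    exact hcomp.partrec₂
  have hdom : ∀ x, ((Nat.rfind fun s => Part.some (memL (state e s) x)).Dom ↔ x ∈ AA e) := by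
    intro x
    refine Nat.rfind_dom.trans ?_
    constructor
    · rintro ⟨s, hs, -⟩
      exact ⟨s, by simpa using hs⟩
    · rintro ⟨s, hs⟩
      exact ⟨s, by simpa using hs, fun {m} _ => trivial⟩
  exact (Partrec.dom_re hpart).of_eq hdom

end Kummer

theorem stmt6 (U : Interp) (hU : Optimal U) :
    ∃ A : Set ℕ, REset A ∧
      ∃ c : ℕ, ∀ m : ℕ, ∃ n ≥ m, ((2 * Nat.log 2 n - c : ℕ) : ℕ∞) ≤ KC U (seg A n) := by
  classical
  obtain ⟨hpr, -⟩ := hU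
  obtain ⟨e, he0⟩ := Nat.Partrec.Code.exists_code.1 hpr
  have he : ∀ p : Str, Nat.Partrec.Code.eval e (Encodable.encode (p, ([] : Str))) =
      (U p []).map Encodable.encode := by
    intro p
    rw [he0]
    simp [Encodable.encodek]
  refine ⟨Kummer.AA e, Kummer.re_AA e, 1, fun m => ?_⟩
  obtain ⟨n, hn1, hn2, hn3⟩ := Kummer.main_k (U := U) (e := e) he (k := m + 1) (by omega)
  have hmlt : m < 2 ^ (m + 1) := by
    have h1 : m < 2 ^ m := Nat.lt_two_pow_self
    have h2 : 2 ^ m ≤ 2 ^ (m + 1) := Nat.pow_le_pow_right (by norm_num) (by omega)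
    omega
  refine ⟨n, by omega, ?_⟩
  have hlog : Nat.log 2 n = m + 1 := Nat.log_eq_of_pow_le_of_lt_pow hn1 hn2
  rw [hlog]
  unfold KC
  refine le_sInf ?_
  rintro b ⟨p, hp, rfl⟩
  have := hn3 p hp
  simp only []
  exact_mod_cast this
end

section
/- Let A ⊆ ℕ be r.e. and suppose every total function g ≤_T A admits an ω-r.e. approximation with at most x mind-changes: there is a total recursive ḡ(x,s) with lim_s ḡ(x,s) = g(x) and |{s : ḡ(x,s) ≠ ḡ(x,s+1)}| ≤ x for all x. Then for every unbounded, nondecreasing, total recursive function f there is a constant c such that C(χ_A ↾ n) ≤ log n + f(n) + c for all n. -/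
/-- A total function `g` is Turing reducible to `A ⊆ ℕ`: some partial recursive
functional computes `g x` correctly from `x` and long enough initial segments of `χ_A`. -/
def FnTuringRed (g : ℕ → ℕ) (A : Set ℕ) : Prop :=
  ∃ ψ : ℕ × Str →. ℕ, Partrec ψ ∧
    (∀ x n m, m ∈ ψ (x, seg A n) → m = g x) ∧
    (∀ x : ℕ, ∃ n, (ψ (x, seg A n)).Dom)

/-- Turing reducibility `B ≤_T A` for sets of naturals. -/
def TuringRed (B A : Set ℕ) : Prop :=
  ∃ ψ : ℕ × Str →. Bool, Partrec ψ ∧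
    (∀ x n b, b ∈ ψ (x, seg A n) → (b = true ↔ x ∈ B)) ∧
    (∀ x : ℕ, ∃ n, (ψ (x, seg A n)).Dom)

/-- Weak truth-table reducibility of `B ⊆ ℕ` to `A ⊆ {0,1}*`: a Turing reduction
with a total recursive bound `g` on the use of the oracle. -/
def WttRed (B : Set ℕ) (A : Set Str) : Prop :=
  ∃ g : ℕ → ℕ, Computable g ∧
    ∃ ψ : ℕ × Str →. Bool, Partrec ψ ∧
      ∀ x : ℕ, ∃ b, b ∈ ψ (x, segS A (g x)) ∧ (b = true ↔ x ∈ B)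

set_option maxHeartbeats 1000000
namespace Stmt8Aux
open Nat.Partrec (Code)
open Nat.Partrec.Code

/-- stage-`s` approximation to the domain of `eval c`. -/
def apx (c : Code) (s i : ℕ) : Bool := (evaln s c i).isSome

lemma apx_mono {c : Code} {s s' i : ℕ} (h : s ≤ s') (ha : apx c s i = true) :
    apx c s' i = true := by
  unfold apx at *
  rcases Option.isSome_iff_exists.1 ha with ⟨v, hv⟩
  exact Option.isSome_iff_exists.2 ⟨v, evaln_mono h hv⟩

lemma apx_sound {c : Code} {s i : ℕ} (h : apx c s i = true) : (eval c i).Dom := by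
  unfold apx at h
  rcases Option.isSome_iff_exists.1 h with ⟨v, hv⟩
  exact Part.dom_iff_mem.2 ⟨v, evaln_sound hv⟩

lemma apx_complete {c : Code} {i : ℕ} (h : (eval c i).Dom) : ∃ s, apx c s i = true := by
  rcases Part.dom_iff_mem.1 h with ⟨v, hv⟩
  rcases evaln_complete.1 hv with ⟨k, hk⟩
  exact ⟨k, Option.isSome_iff_exists.2 ⟨v, hk⟩⟩

lemma exists_stage (c : Code) (A : Set ℕ)
    (hc : ∀ i, i ∈ A → (eval c i).Dom) (m : ℕ) :
    ∃ s, ∀ i ≤ m, i ∈ A → apx c s i = true := by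
  induction m with
  | zero =>
    by_cases h0 : 0 ∈ A
    · rcases apx_complete (hc 0 h0) with ⟨s, hs⟩
      refine ⟨s, fun i hi _ => ?_⟩
      obtain rfl : i = 0 := Nat.le_zero.1 hi
      exact hs
    · refine ⟨0, fun i hi hiA => ?_⟩
      obtain rfl : i = 0 := Nat.le_zero.1 hi
      exact absurd hiA h0
  | succ m ih =>
    rcases ih with ⟨s₁, hs₁⟩
    by_cases h1 : m + 1 ∈ A
    · rcases apx_complete (hc _ h1) with ⟨s₂, hs₂⟩
      refine ⟨max s₁ s₂, fun i hi hiA => ?_⟩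
      rcases Nat.le_succ_iff.1 hi with h | h
      · exact apx_mono (le_max_left _ _) (hs₁ i h hiA)
      · subst h; exact apx_mono (le_max_right _ _) hs₂
    · refine ⟨s₁, fun i hi hiA => ?_⟩
      rcases Nat.le_succ_iff.1 hi with h | h
      · exact hs₁ i h hiA
      · subst h; exact absurd hiA h1

/-! ### decoding strings to numbers -/

def dec (p : List Bool) : ℕ := p.foldr Nat.bit 0

lemma dec_bits (N : ℕ) : dec (Nat.bits N) = N := by
  induction N using Nat.binaryRec' with
  | zero => simp [dec]
  | bit b n hyp ih =>
    rw [Nat.bits_append_bit n b hyp]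
    simpa [dec] using congrArg (Nat.bit b) ih

lemma primrec_bit : Primrec₂ Nat.bit := by
  have h2 : Primrec fun p : Bool × ℕ => 2 * p.2 :=
    Primrec.nat_mul.comp (Primrec.const 2) Primrec.snd
  exact (Primrec.cond Primrec.fst (Primrec.succ.comp h2) h2).to₂.of_eq fun p q => by
    cases p <;> rfl

lemma primrec_dec : Primrec dec :=
  (Primrec.list_foldr Primrec.id (Primrec.const 0)
    (primrec_bit.comp (Primrec.fst.comp Primrec.snd)
      (Primrec.snd.comp Primrec.snd)).to₂).of_eq fun l => rfl

/-! ### mind-change counting -/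

def mc (G : ℕ → ℕ → ℕ) (x : ℕ) : ℕ → ℕ
  | 0 => 0
  | t + 1 => mc G x t + (if G x t = G x (t + 1) then 0 else 1)

lemma computable_mc {G : ℕ → ℕ → ℕ} (hG : Computable₂ G) : Computable₂ (mc G) := by
  have hstep : Computable₂ fun (p : ℕ × ℕ) (q : ℕ × ℕ) =>
      q.2 + (if G p.1 q.1 = G p.1 (q.1 + 1) then 0 else 1) := by
    have h1 : Computable fun r : (ℕ × ℕ) × ℕ × ℕ => G r.1.1 r.2.1 :=
      hG.comp (Computable.fst.comp Computable.fst) (Computable.fst.comp Computable.snd)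
    have h2 : Computable fun r : (ℕ × ℕ) × ℕ × ℕ => G r.1.1 (r.2.1 + 1) :=
      hG.comp (Computable.fst.comp Computable.fst)
        (Computable.succ.comp (Computable.fst.comp Computable.snd))
    have hc : Computable fun r : (ℕ × ℕ) × ℕ × ℕ =>
        (if G r.1.1 r.2.1 = G r.1.1 (r.2.1 + 1) then 0 else 1 : ℕ) :=
      (Computable.cond ((Primrec₂.to_comp (f := fun a b : ℕ => decide (a = b)) Primrec.eq.decide).comp h1 h2) (Computable.const 0)
        (Computable.const 1)).of_eq fun r => by
          by_cases h : G r.1.1 r.2.1 = G r.1.1 (r.2.1 + 1) <;> simp [h]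
    exact (Primrec.nat_add.to_comp.comp (Computable.snd.comp Computable.snd) hc).to₂
  have := Computable.nat_rec (f := fun p : ℕ × ℕ => p.2) (g := fun _ : ℕ × ℕ => 0)
    Computable.snd (Computable.const 0) hstep
  exact this.of_eq fun p => by
    obtain ⟨x, t⟩ := p
    induction t with
    | zero => rfl
    | succ t ih => simp only [mc] at ih ⊢; rw [← ih]

lemma mc_eq_card (G : ℕ → ℕ → ℕ) (x : ℕ) : ∀ t,
    mc G x t = ((Finset.range t).filter fun s => G x s ≠ G x (s + 1)).card := by
  intro t
  induction t with
  | zero => simp [mc]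
  | succ t ih =>
    rw [Finset.range_add_one, Finset.filter_insert]
    by_cases h : G x t = G x (t + 1)
    · simp [mc, h, ih]
    · rw [if_pos h, Finset.card_insert_of_notMem (by simp)]
      simp [mc, h, ih]

lemma mc_exists (G : ℕ → ℕ → ℕ) (x : ℕ)
    (hfin : {s | G x s ≠ G x (s + 1)}.Finite) :
    ∃ t, mc G x t = {s | G x s ≠ G x (s + 1)}.ncard := by
  rcases hfin.bddAbove with ⟨t, ht⟩
  refine ⟨t + 1, ?_⟩
  rw [mc_eq_card, Set.ncard_eq_toFinset_card _ hfin]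
  congr 1
  ext s
  simp only [Finset.mem_filter, Finset.mem_range, Set.Finite.mem_toFinset, Set.mem_setOf_eq]
  exact ⟨fun h => h.2, fun h => ⟨Nat.lt_succ_of_le (ht h), h⟩⟩

lemma mc_stable (G : ℕ → ℕ → ℕ) (x t : ℕ)
    (hfin : {s | G x s ≠ G x (s + 1)}.Finite)
    (hmc : mc G x t = {s | G x s ≠ G x (s + 1)}.ncard) :
    ∀ s, t ≤ s → G x s = G x t := by
  have hsub : ((Finset.range t).filter fun s => G x s ≠ G x (s + 1)) ⊆ hfin.toFinset := by
    intro s hs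
    simp only [Finset.mem_filter] at hs
    simpa using hs.2
  have hcard : hfin.toFinset.card ≤
      ((Finset.range t).filter fun s => G x s ≠ G x (s + 1)).card := by
    rw [← mc_eq_card, hmc, Set.ncard_eq_toFinset_card _ hfin]
  have heq := Finset.eq_of_subset_of_card_le hsub hcard
  have hout : ∀ s, t ≤ s → G x s = G x (s + 1) := by
    intro s hs
    by_contra hne
    have : s ∈ hfin.toFinset := by simpa using hne
    rw [← heq] at this
    simp only [Finset.mem_filter, Finset.mem_range] at this
    omega
  intro s hs
  induction s with
  | zero => obtain rfl : t = 0 := Nat.le_zero.1 hs; rfl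
  | succ s ih =>
    rcases Nat.le_succ_iff.1 hs with h | h
    · rw [← hout s h]; exact ih h
    · rw [h]

/-! ### bounded check -/

lemma foldr_and (p : ℕ → Bool) : ∀ l : List ℕ,
    ((l.foldr (fun i b => p i && b) true) = true ↔ ∀ i ∈ l, p i = true) := by
  intro l; induction l with
  | nil => simp
  | cons a l ih => simp [ih, Bool.and_eq_true]

def chk (c : Code) (σ : List Bool) (h s : ℕ) : Bool :=
  (List.range (h + 1)).foldr (fun i b => ((!(σ.getD i false)) || apx c s i) && b) true

lemma chk_iff {c : Code} {σ : List Bool} {h s : ℕ} :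
    chk c σ h s = true ↔ ∀ i ≤ h, σ.getD i false = true → apx c s i = true := by
  unfold chk
  rw [foldr_and]
  constructor
  · intro H i hi hσ
    have h2 := H i (List.mem_range.2 (Nat.lt_succ_of_le hi))
    rw [hσ] at h2
    simpa using h2
  · intro H i hi
    cases hb : σ.getD i false with
    | false => simp [hb]
    | true => simp [hb, H i (Nat.lt_succ_iff.1 (List.mem_range.1 hi)) hb]

lemma primrec_chk (c : Code) :
    Primrec fun q : List Bool × ℕ × ℕ => chk c q.1 q.2.1 q.2.2 := by
  have hrange : Primrec fun q : List Bool × ℕ × ℕ => List.range (q.2.1 + 1) :=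
    Primrec.list_range.comp (Primrec.succ.comp (Primrec.fst.comp Primrec.snd))
  have hgetD : Primrec fun r : (List Bool × ℕ × ℕ) × ℕ × Bool => r.1.1.getD r.2.1 false :=
    (Primrec.list_getD false).comp (Primrec.fst.comp Primrec.fst) (Primrec.fst.comp Primrec.snd)
  have hapx : Primrec fun r : (List Bool × ℕ × ℕ) × ℕ × Bool => apx c r.1.2.2 r.2.1 := by
    have : Primrec fun r : (List Bool × ℕ × ℕ) × ℕ × Bool =>
        evaln r.1.2.2 c r.2.1 :=
      primrec_evaln.comp <| Primrec.pair
        (Primrec.pair (Primrec.snd.comp (Primrec.snd.comp Primrec.fst)) (Primrec.const c))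
        (Primrec.fst.comp Primrec.snd)
    exact Primrec.option_isSome.comp this
  have hnot : Primrec (fun b : Bool => !b) := Primrec.dom_bool _
  have hor : Primrec₂ (fun a b : Bool => a || b) := Primrec.dom_bool₂ _
  have hand : Primrec₂ (fun a b : Bool => a && b) := Primrec.dom_bool₂ _
  have hstep : Primrec₂ fun (q : List Bool × ℕ × ℕ) (r : ℕ × Bool) =>
      ((!(q.1.getD r.1 false)) || apx c q.2.2 r.1) && r.2 := by
    exact hand.comp (hor.comp (hnot.comp hgetD) hapx) (Primrec.snd.comp Primrec.snd)
  exact (Primrec.list_foldr hrange (Primrec.const true) hstep).of_eq fun q => rfl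

/-! ### the reduction functional and the decoder -/

def psi (c : Code) (f : ℕ → ℕ) : ℕ × List Bool →. ℕ := fun q =>
  (Nat.rfind fun m => Part.some (decide (q.1 < 2 ^ f (m + 1)))).bind fun h =>
    Nat.rfind fun s => Part.some (decide (h < q.2.length) && chk c q.2 h s)

lemma primrec_pow : Primrec₂ ((· ^ ·) : ℕ → ℕ → ℕ) :=
  Primrec₂.unpaired'.1 Nat.Primrec.pow

lemma partrec_psi (c : Code) {f : ℕ → ℕ} (hf : Computable f) : Partrec (psi c f) := by
  have h1 : Computable₂ fun (q : ℕ × List Bool) (m : ℕ) =>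
      decide (q.1 < 2 ^ f (m + 1)) :=
    ((Primrec₂.to_comp (f := fun a b : ℕ => decide (a < b)) Primrec.nat_lt.decide).comp (Computable.fst.comp Computable.fst)
      (primrec_pow.to_comp.comp (Computable.const 2)
        (hf.comp (Computable.succ.comp Computable.snd)))).to₂
  have h2p : Primrec fun p : ((ℕ × List Bool) × ℕ) × ℕ =>
      (decide (p.1.2 < p.1.1.2.length) && chk c p.1.1.2 p.1.2 p.2) := by
    have hlt : Primrec fun p : ((ℕ × List Bool) × ℕ) × ℕ =>
        decide (p.1.2 < p.1.1.2.length) :=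
      Primrec₂.comp (f := fun a b : ℕ => decide (a < b)) Primrec.nat_lt.decide (Primrec.snd.comp Primrec.fst)
        (Primrec.list_length.comp
          (Primrec.snd.comp (Primrec.fst.comp Primrec.fst)))
    have hchk : Primrec fun p : ((ℕ × List Bool) × ℕ) × ℕ =>
        chk c p.1.1.2 p.1.2 p.2 :=
      (primrec_chk c).comp
        (Primrec.pair (Primrec.snd.comp (Primrec.fst.comp Primrec.fst))
          (Primrec.pair (Primrec.snd.comp Primrec.fst) Primrec.snd))
    exact (Primrec.dom_bool₂ (· && ·)).comp hlt hchk
  have h2 : Computable₂ fun (r : (ℕ × List Bool) × ℕ) (s : ℕ) =>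
      (decide (r.2 < r.1.2.length) && chk c r.1.2 r.2 s) := h2p.to_comp.to₂
  have hr1 : Partrec fun q : ℕ × List Bool =>
      Nat.rfind fun m => Part.some (decide (q.1 < 2 ^ f (m + 1))) :=
    Partrec.rfind h1.partrec₂
  have hr2 : Partrec₂ fun (q : ℕ × List Bool) (h : ℕ) =>
      Nat.rfind fun s => Part.some (decide (h < q.2.length) && chk c q.2 h s) :=
    (Partrec.rfind h2.partrec₂ : Partrec _)
  exact hr1.bind hr2



def outL (c : Code) (n v : ℕ) : List Bool := (List.range (n + 1)).map fun i => apx c v i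

lemma primrec_outL (c : Code) : Primrec₂ (outL c) := by
  have hapx : Primrec fun r : (ℕ × ℕ) × ℕ => apx c r.1.2 r.2 :=
    Primrec.option_isSome.comp (primrec_evaln.comp
      (Primrec.pair (Primrec.pair (Primrec.snd.comp Primrec.fst) (Primrec.const c))
        Primrec.snd))
  exact (Primrec.list_map (Primrec.list_range.comp (Primrec.succ.comp Primrec.fst))
    hapx.to₂).to₂

def D (c : Code) (f : ℕ → ℕ) (G : ℕ → ℕ → ℕ) (p : List Bool) : Part (Option (List Bool)) :=
  (Nat.rfind fun m => Part.some (decide (dec p / 2 ^ (f m + 1) = m))).bind fun n =>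
    (Nat.rfind fun t =>
      Part.some (decide (mc G (2 ^ f n) t = dec p % 2 ^ (f n + 1)))).map fun t =>
        some (outL c n (G (2 ^ f n) t))

lemma partrec_D (c : Code) {f : ℕ → ℕ} {G : ℕ → ℕ → ℕ}
    (hf : Computable f) (hG : Computable₂ G) : Partrec (D c f G) := by
  have hdec : Computable dec := primrec_dec.to_comp
  have h1 : Computable₂ fun (p : List Bool) (m : ℕ) =>
      decide (dec p / 2 ^ (f m + 1) = m) :=
    ((Primrec₂.to_comp (f := fun a b : ℕ => decide (a = b)) Primrec.eq.decide).comp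
      (Primrec.nat_div.to_comp.comp (hdec.comp Computable.fst)
        (primrec_pow.to_comp.comp (Computable.const 2)
          (Computable.succ.comp (hf.comp Computable.snd))))
      Computable.snd).to₂
  have hr1 : Partrec fun p : List Bool =>
      Nat.rfind fun m => Part.some (decide (dec p / 2 ^ (f m + 1) = m)) :=
    Partrec.rfind h1.partrec₂
  have h2 : Computable₂ fun (q : List Bool × ℕ) (t : ℕ) =>
      decide (mc G (2 ^ f q.2) t = dec q.1 % 2 ^ (f q.2 + 1)) := by
    have hmc := computable_mc hG
    exact ((Primrec₂.to_comp (f := fun a b : ℕ => decide (a = b)) Primrec.eq.decide).comp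
      (hmc.comp
        (primrec_pow.to_comp.comp (Computable.const 2)
          (hf.comp (Computable.snd.comp Computable.fst)))
        Computable.snd)
      (Primrec.nat_mod.to_comp.comp (hdec.comp (Computable.fst.comp Computable.fst))
        (primrec_pow.to_comp.comp (Computable.const 2)
          (Computable.succ.comp (hf.comp (Computable.snd.comp Computable.fst)))))).to₂
  have hr2 : Partrec fun q : List Bool × ℕ =>
      Nat.rfind fun t => Part.some (decide (mc G (2 ^ f q.2) t = dec q.1 % 2 ^ (f q.2 + 1))) :=
    Partrec.rfind h2.partrec₂
  have hout : Computable₂ fun (q : List Bool × ℕ) (t : ℕ) =>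
      (some (outL c q.2 (G (2 ^ f q.2) t)) : Option (List Bool)) := by
    have hv : Computable fun r : (List Bool × ℕ) × ℕ => G (2 ^ f r.1.2) r.2 :=
      hG.comp (primrec_pow.to_comp.comp (Computable.const 2)
        (hf.comp (Computable.snd.comp Computable.fst))) Computable.snd
    exact (Computable.option_some.comp ((primrec_outL c).to_comp.comp
      (Computable.snd.comp Computable.fst) hv)).to₂
  exact hr1.bind (hr2.map hout)

end Stmt8Aux


theorem stmt8 (U : Interp) (hU : Optimal U) (A : Set ℕ) (hA : REset A)
    (happ : ∀ g : ℕ → ℕ, FnTuringRed g A →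
      ∃ gbar : ℕ → ℕ → ℕ, Computable₂ gbar ∧
        (∀ x, ∃ s₀, ∀ s ≥ s₀, gbar x s = g x) ∧
        (∀ x, {s | gbar x s ≠ gbar x (s + 1)}.Finite ∧
          {s | gbar x s ≠ gbar x (s + 1)}.ncard ≤ x))
    (f : ℕ → ℕ) (hf : Computable f) (hmono : Monotone f) (hunb : ∀ m, ∃ n, m ≤ f n) :
    ∃ c : ℕ, ∀ n : ℕ, KC U (seg A n) ≤ ((Nat.log 2 n + f n + c : ℕ) : ℕ∞) := by
  classical
  open Stmt8Aux in
  obtain ⟨hUpr, hUopt⟩ := hU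
  -- a code enumerating `A`
  have hA' : Partrec fun a : ℕ =>
      (Part.assert (a ∈ A) fun _ => Part.some ()).map fun _ => (0 : ℕ) :=
    Partrec.map hA (Computable.const 0).to₂
  obtain ⟨c, hc⟩ := Nat.Partrec.Code.exists_code.1 (Partrec.nat_iff.1 hA')
  have hcdom : ∀ i, (Nat.Partrec.Code.eval c i).Dom ↔ i ∈ A := by
    intro i
    rw [hc]
    constructor
    · rintro ⟨h, -⟩
      exact h
    · intro h
      exact ⟨h, trivial⟩
  -- basic facts about `seg`
  have hseglen : ∀ n, (seg A n).length = n + 1 := by intro n; simp [seg]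
  have hsegget : ∀ n i, i ≤ n → ((seg A n).getD i false = true ↔ i ∈ A) := by
    intro n i hi
    have : i < n + 1 := Nat.lt_succ_of_le hi
    simp [seg, List.getD, List.getElem?_map, List.getElem?_range, this]
  -- the scale function
  have hhex : ∀ x : ℕ, ∃ m, x < 2 ^ f (m + 1) := by
    intro x
    obtain ⟨m, hm⟩ := hunb (x + 1)
    refine ⟨m, lt_of_lt_of_le ((Nat.lt_two_pow_self (n := x))) (Nat.pow_le_pow_right (by norm_num) ?_)⟩
    exact le_trans (le_trans (Nat.le_succ x) hm) (hmono (Nat.le_succ m))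
  -- the modulus-type function
  have hstg : ∀ x : ℕ, ∃ s, ∀ i ≤ Nat.find (hhex x), i ∈ A → apx c s i = true :=
    fun x => exists_stage c A (fun i hi => (hcdom i).2 hi) _
  set g' : ℕ → ℕ := fun x => Nat.find (hstg x) with hg'def
  -- `g' ≤_T A`
  have hred : FnTuringRed g' A := by
    refine ⟨psi c f, partrec_psi c hf, ?_, ?_⟩
    · intro x n m hm
      unfold psi at hm
      rw [Part.mem_bind_iff] at hm
      obtain ⟨h, hh1, hm2⟩ := hm
      have hfind : h = Nat.find (hhex x) := by
        refine ((Nat.find_eq_iff (hhex x)).2 ⟨?_, ?_⟩).symm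
        · have := Nat.rfind_spec hh1
          rw [Part.mem_some_iff] at this
          exact of_decide_eq_true this.symm
        · intro k hk
          have := Nat.rfind_min hh1 hk
          rw [Part.mem_some_iff] at this
          simpa using this.symm
      subst hfind
      set h := Nat.find (hhex x) with hhdef
      have hspec2 := Nat.rfind_spec hm2
      rw [Part.mem_some_iff] at hspec2
      have hspec2' := hspec2.symm
      rw [Bool.and_eq_true] at hspec2'
      obtain ⟨hlt, hchk⟩ := hspec2'
      have hlt' : h ≤ n := by
        have := of_decide_eq_true hlt
        rw [hseglen] at this
        omega
      have hPm : ∀ i ≤ h, i ∈ A → apx c m i = true := by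
        intro i hi hiA
        exact (chk_iff.1 hchk) i hi ((hsegget n i (le_trans hi hlt')).2 hiA)
      have hmins : ∀ k, k < m → ¬ ∀ i ≤ h, i ∈ A → apx c k i = true := by
        intro k hk hPk
        have hfalse := Nat.rfind_min hm2 hk
        rw [Part.mem_some_iff] at hfalse
        have hchkk : chk c (seg A n) h k = true := by
          refine chk_iff.2 fun i hi hσ => ?_
          exact hPk i hi ((hsegget n i (le_trans hi hlt')).1 hσ)
        rw [hchkk, hseglen] at hfalse
        simp at hfalse
        omega
      have : Nat.find (hstg x) = m := (Nat.find_eq_iff (hstg x)).2 ⟨hPm, fun k hk => hmins k hk⟩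
      rw [hg'def]
      exact this.symm
    · intro x
      refine ⟨Nat.find (hhex x), Part.dom_iff_mem.2 ⟨g' x, ?_⟩⟩
      unfold psi
      rw [Part.mem_bind_iff]
      refine ⟨Nat.find (hhex x), ?_, ?_⟩
      · refine Nat.mem_rfind.2 ⟨?_, ?_⟩
        · rw [Part.mem_some_iff]
          exact (decide_eq_true (Nat.find_spec (hhex x))).symm
        · intro k hk
          rw [Part.mem_some_iff]
          exact (decide_eq_false (Nat.find_min (hhex x) hk)).symm
      · refine Nat.mem_rfind.2 ⟨?_, ?_⟩
        · rw [Part.mem_some_iff]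
          have h1 : decide (Nat.find (hhex x) < (seg A (Nat.find (hhex x))).length) = true := by
            rw [hseglen]; simp
          have h2 : chk c (seg A (Nat.find (hhex x))) (Nat.find (hhex x)) (g' x) = true := by
            refine chk_iff.2 fun i hi hσ => ?_
            exact Nat.find_spec (hstg x) i hi ((hsegget _ i hi).1 hσ)
          rw [h1, h2]
          rfl
        · intro k hk
          rw [Part.mem_some_iff]
          cases hb : chk c (seg A (Nat.find (hhex x))) (Nat.find (hhex x)) k with
          | false => simp
          | true =>
            exfalso
            refine Nat.find_min (hstg x) hk fun i hi hiA => ?_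
            exact (chk_iff.1 hb) i hi ((hsegget _ i hi).2 hiA)
  -- the approximation to `g'`
  obtain ⟨G, hGc, hGlim, hGmc⟩ := happ g' hred
  -- the interpreter
  set U' : Interp := fun p _ => D c f G p with hU'def
  have hU'p : Partrec₂ U' := (partrec_D c hf hGc).comp Computable.fst
  obtain ⟨c₀, hKCle, -, -⟩ := hUopt U' hU'p
  refine ⟨c₀ + 3, fun n => ?_⟩
  -- program for `seg A n`
  obtain ⟨hfin, hjx⟩ := hGmc (2 ^ f n)
  set j : ℕ := {s | G (2 ^ f n) s ≠ G (2 ^ f n) (s + 1)}.ncard with hjdef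
  set N : ℕ := 2 ^ (f n + 1) * n + j with hNdef
  set p : Str := Nat.bits N with hpdef
  have hxpos : 0 < 2 ^ (f n + 1) := (by positivity)
  have hjlt : j < 2 ^ (f n + 1) := lt_of_le_of_lt hjx (by
    exact Nat.pow_lt_pow_right (by norm_num) (Nat.lt_succ_self _))
  have hdiv : N / 2 ^ (f n + 1) = n := by
    rw [hNdef, Nat.mul_add_div hxpos, Nat.div_eq_of_lt hjlt, Nat.add_zero]
  have hmod : N % 2 ^ (f n + 1) = j := by
    rw [hNdef, Nat.mul_add_mod, Nat.mod_eq_of_lt hjlt]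
  have hdecp : dec p = N := dec_bits N
  -- the first search finds `n`
  have hmem1 : n ∈ Nat.rfind fun m => Part.some (decide (dec p / 2 ^ (f m + 1) = m)) := by
    refine Nat.mem_rfind.2 ⟨?_, ?_⟩
    · rw [Part.mem_some_iff]
      rw [hdecp]
      exact (decide_eq_true hdiv).symm
    · intro m hm
      rw [Part.mem_some_iff, hdecp]
      refine (decide_eq_false ?_).symm
      intro heq
      have hle : 2 ^ (f m + 1) ≤ 2 ^ (f n + 1) :=
        Nat.pow_le_pow_right (by norm_num) (by have := hmono (le_of_lt hm); omega)
      have : n ≤ N / 2 ^ (f m + 1) := by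
        rw [← hdiv]
        exact Nat.div_le_div_left hle ((by positivity))
      omega
  -- the second search terminates
  obtain ⟨tex, htex⟩ := mc_exists G (2 ^ f n) hfin
  have hdom2 : (Nat.rfind fun t =>
      Part.some (decide (mc G (2 ^ f n) t = dec p % 2 ^ (f n + 1)))).Dom := by
    refine Nat.rfind_dom.2 ⟨tex, ?_, fun {m} _ => trivial⟩
    rw [Part.mem_some_iff, hdecp, hmod]
    exact (decide_eq_true htex).symm
  set t₀ : ℕ := (Nat.rfind fun t =>
      Part.some (decide (mc G (2 ^ f n) t = dec p % 2 ^ (f n + 1)))).get hdom2 with ht₀def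
  have ht₀ : t₀ ∈ Nat.rfind fun t =>
      Part.some (decide (mc G (2 ^ f n) t = dec p % 2 ^ (f n + 1))) := Part.get_mem hdom2
  have hmct₀ : mc G (2 ^ f n) t₀ = j := by
    have := Nat.rfind_spec ht₀
    rw [Part.mem_some_iff, hdecp, hmod] at this
    exact of_decide_eq_true this.symm
  have hstab := mc_stable G (2 ^ f n) t₀ hfin hmct₀
  obtain ⟨s₀, hs₀⟩ := hGlim (2 ^ f n)
  have hval : G (2 ^ f n) t₀ = g' (2 ^ f n) := by
    rw [← hstab (max t₀ s₀) (le_max_left _ _), hs₀ _ (le_max_right _ _)]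
  -- the scale is large enough
  have hkey : n ≤ Nat.find (hhex (2 ^ f n)) := by
    rw [Nat.le_find_iff]
    intro m hm
    exact not_lt.2 (Nat.pow_le_pow_right (by norm_num) (hmono (by omega)))
  -- the output is correct
  have hout_eq : outL c n (G (2 ^ f n) t₀) = seg A n := by
    rw [hval]
    unfold outL seg
    refine List.map_congr_left fun i hi => ?_
    have hi' : i ≤ n := Nat.lt_succ_iff.1 (List.mem_range.1 hi)
    by_cases hiA : i ∈ A
    · rw [Nat.find_spec (hstg (2 ^ f n)) i (le_trans hi' hkey) hiA]
      simp [hiA]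
    · have hfa : apx c (g' (2 ^ f n)) i = false := by
        cases hb : apx c (g' (2 ^ f n)) i with
        | false => rfl
        | true => exact absurd ((hcdom i).1 (apx_sound hb)) hiA
      rw [hfa]
      simp [hiA]
  have hmemD : some (seg A n) ∈ D c f G p := by
    unfold D
    rw [Part.mem_bind_iff]
    refine ⟨n, hmem1, ?_⟩
    rw [Part.mem_map_iff]
    exact ⟨t₀, ht₀, by rw [hout_eq]⟩
  -- complexity bound
  have hKCU' : KC U' (seg A n) ≤ (p.length : ℕ∞) := by
    unfold KC
    exact sInf_le ⟨p, hmemD, rfl⟩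
  have hlog1 : Nat.log 2 (n + 1) ≤ Nat.log 2 n + 1 := by
    rcases Nat.eq_zero_or_pos n with rfl | hn
    · simp
    · calc Nat.log 2 (n + 1) ≤ Nat.log 2 (n * 2) := Nat.log_mono_right (by omega)
        _ = Nat.log 2 n + 1 := Nat.log_mul_base (by norm_num) (by omega)
  have hlen : p.length ≤ Nat.log 2 n + f n + 3 := by
    rw [hpdef, Nat.size_eq_bits_len]
    refine Nat.size_le.2 ?_
    calc N < 2 ^ (f n + 1) * (n + 1) := by
            rw [hNdef, Nat.mul_succ]
            omega
      _ ≤ 2 ^ (f n + 1) * 2 ^ (Nat.log 2 n + 2) := by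
            refine Nat.mul_le_mul_left _ ?_
            calc n + 1 ≤ 2 ^ (Nat.log 2 (n + 1) + 1) :=
                  le_of_lt (Nat.lt_pow_succ_log_self (by norm_num) (n + 1))
              _ ≤ 2 ^ (Nat.log 2 n + 2) := Nat.pow_le_pow_right (by norm_num) (by omega)
      _ = 2 ^ (Nat.log 2 n + f n + 3) := by
            rw [← pow_add]
            congr 1
            omega
  calc KC U (seg A n) ≤ KC U' (seg A n) + (c₀ : ℕ∞) := hKCle _
    _ ≤ (p.length : ℕ∞) + (c₀ : ℕ∞) := add_le_add_left hKCU' _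
    _ ≤ ((Nat.log 2 n + f n + 3 : ℕ) : ℕ∞) + (c₀ : ℕ∞) :=
        add_le_add_left (by exact_mod_cast hlen) _
    _ = ((Nat.log 2 n + f n + (c₀ + 3) : ℕ) : ℕ∞) := by
        push_cast
        ring
end
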